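/- Let λ ∈ ℂ with |λ| ≠ 1. Then for every matrix B ∈ ℂ^{n×n} there exists R ∈ ℂ^{n×n} such that B + J_n(λ)·R + R* = 0; in other words, the real-linear map R ↦ J_n(λ)·R + R* from ℂ^{n×n} to ℂ^{n×n} is surjective. -/

import Mathlib

open Matrix

/-- The `n×n` upper-triangular Jordan block with eigenvalue `l`. -/
noncomputable def Jmat (n : ℕ) (l : ℂ) : Matrix (Fin n) (Fin n) ℂ :=
  Matrix.of fun i j =>
    if (i : ℕ) = (j : ℕ) then l
    else if (j : ℕ) = (i : ℕ) + 1 then 1 else 0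

/-- The symmetric matrix `Δ_n`: (1-based) entry `(j,k)` is `1` if `j+k = n+1`,
`i` if `j+k = n+2`, and `0` otherwise. -/
noncomputable def Dmat (n : ℕ) : Matrix (Fin n) (Fin n) ℂ :=
  Matrix.of fun i j =>
    if (i : ℕ) + (j : ℕ) + 1 = n then 1
    else if (i : ℕ) + (j : ℕ) = n then Complex.I
    else 0

/-- The `2m×2m` block matrix `H_m(l) = [[0, I],[J_m(l), 0]]`. -/
noncomputable def Hmat (m : ℕ) (l : ℂ) : Matrix (Fin m ⊕ Fin m) (Fin m ⊕ Fin m) ℂ :=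
  Matrix.fromBlocks 0 1 (Jmat m l) 0

/-- `T(A) = {CᴴA + AC}`, the tangent space to the *congruence class of `A`. -/
def Tset {n : Type*} [Fintype n] (A : Matrix n n ℂ) : Set (Matrix n n ℂ) :=
  {X | ∃ C : Matrix n n ℂ, X = Cᴴ * A + A * C}

/-- `T(M,N) = {(SᴴM + NR, RᴴN + MS)}`. -/
def Tpair {p q : Type*} [Fintype p] [Fintype q]
    (M : Matrix p p ℂ) (N : Matrix q q ℂ) :
    Set (Matrix q p ℂ × Matrix p q ℂ) :=
  {X | ∃ (S : Matrix p q ℂ) (R : Matrix q p ℂ),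
      X = (Sᴴ * M + N * R, Rᴴ * N + M * S)}


/-- For `|λ| ≠ 1`, the map `R ↦ J_n(λ)·R + Rᴴ` is surjective: every `B` can be
reduced to `0` by adding `J_n(λ)·R + Rᴴ`. -/
lemma mul_J_entry (n : ℕ) (l : ℂ) (X : Matrix (Fin n) (Fin n) ℂ) (i j : Fin n) :
    (Jmat n l * X) i j =
      l * X i j + (if h : (i : ℕ) + 1 < n then X ⟨(i : ℕ) + 1, h⟩ j else 0) := by
  rw [Matrix.mul_apply]
  have hsum : ∀ a : Fin n,
      Jmat n l i a * X a j =
        (if a = i then l * X a j else 0) +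
        (if h : (i : ℕ) + 1 < n then (if a = (⟨(i:ℕ)+1, h⟩ : Fin n) then X a j else 0) else 0) := by
    intro a
    simp only [Jmat, Matrix.of_apply]
    by_cases h1 : (i : ℕ) = (a : ℕ)
    · have : a = i := Fin.ext h1.symm
      subst this
      rw [if_pos rfl, if_pos rfl]
      have hz : (if h : (a:ℕ)+1 < n then (if a = (⟨(a:ℕ)+1, h⟩ : Fin n) then X a j else 0) else 0) = 0 := by
        split_ifs with h h2
        · have := congrArg Fin.val h2; simp at this
        · rfl
        · rfl
      rw [hz, add_zero]
    · have hne : a ≠ i := fun h => h1 (congrArg Fin.val h).symm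
      rw [if_neg h1, if_neg hne, zero_add]
      by_cases h2 : (a : ℕ) = (i : ℕ) + 1
      · have hlt : (i : ℕ) + 1 < n := h2 ▸ a.isLt
        rw [if_pos h2, dif_pos hlt, if_pos (Fin.ext h2), one_mul]
      · rw [if_neg h2, zero_mul]
        split_ifs with h3 h4
        · exact absurd (congrArg Fin.val h4) h2
        · rfl
        · rfl
  rw [Finset.sum_congr rfl (fun a _ => hsum a), Finset.sum_add_distrib]
  congr 1
  · simp
  · split_ifs with h
    · simp
    · simp

lemma mul_Jh_entry (n : ℕ) (l : ℂ) (X : Matrix (Fin n) (Fin n) ℂ) (i j : Fin n) :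
    (X * (Jmat n l)ᴴ) i j =
      star l * X i j + (if h : (j : ℕ) + 1 < n then X i ⟨(j : ℕ) + 1, h⟩ else 0) := by
  have : (X * (Jmat n l)ᴴ) i j = star ((Jmat n l * Xᴴ) j i) := by
    rw [← Matrix.conjTranspose_apply, Matrix.conjTranspose_mul, Matrix.conjTranspose_conjTranspose]
  rw [this, mul_J_entry]
  push_cast [star_add, star_mul']
  congr 1
  · rw [Matrix.conjTranspose_apply, star_star]
  · split_ifs with h
    · rw [Matrix.conjTranspose_apply, star_star]
    · exact star_zero _

/-- Extension of a matrix to all of `ℕ × ℕ` by zero. -/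
noncomputable def rext (n : ℕ) (R : Matrix (Fin n) (Fin n) ℂ) (i j : ℕ) : ℂ :=
  if h : i < n ∧ j < n then R ⟨i, h.1⟩ ⟨j, h.2⟩ else 0

lemma Jmat_inj (n : ℕ) (l : ℂ) (hl : ‖l‖ ≠ 1)
    (R : Matrix (Fin n) (Fin n) ℂ) (hR : Jmat n l * R + Rᴴ = 0) : R = 0 := by
  have hne : (1 : ℂ) - l * star l ≠ 0 := by
    intro h
    have h1 : l * star l = 1 := by linear_combination -h
    rw [show (star l = (starRingEnd ℂ) l) from rfl, Complex.mul_conj] at h1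
    have h2 : Complex.normSq l = 1 := by exact_mod_cast h1
    have := Complex.sq_norm l
    rw [h2] at this
    apply hl
    nlinarith [norm_nonneg l]
  have h1 : Rᴴ = -(Jmat n l * R) := eq_neg_of_add_eq_zero_right hR
  have hkey : R = Jmat n l * R * (Jmat n l)ᴴ := by
    conv_lhs => rw [← Matrix.conjTranspose_conjTranspose R, h1]
    rw [Matrix.conjTranspose_neg, Matrix.conjTranspose_mul, h1]
    simp [Matrix.neg_mul]
  have hmain : ∀ i j : ℕ,
      (1 - l * star l) * rext n R i j =
        star l * rext n R (i+1) j + l * rext n R i (j+1) + rext n R (i+1) (j+1) := by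
    intro i j
    by_cases hi : i < n
    · by_cases hj : j < n
      · have E : R ⟨i, hi⟩ ⟨j, hj⟩ =
            (Jmat n l * (R * (Jmat n l)ᴴ)) ⟨i, hi⟩ ⟨j, hj⟩ := by
          conv_lhs => rw [hkey]
          rw [Matrix.mul_assoc]
        rw [mul_J_entry, mul_Jh_entry] at E
        by_cases hi2 : i + 1 < n
        · rw [dif_pos hi2, mul_Jh_entry] at E
          by_cases hj2 : j + 1 < n
          · rw [dif_pos hj2, dif_pos hj2] at E
            simp only [rext, dif_pos (And.intro hi hj), dif_pos (And.intro hi2 hj),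
              dif_pos (And.intro hi hj2), dif_pos (And.intro hi2 hj2)]
            linear_combination E
          · rw [dif_neg hj2, dif_neg hj2] at E
            simp only [rext, dif_pos (And.intro hi hj), dif_pos (And.intro hi2 hj),
              dif_neg (fun h : i < n ∧ j + 1 < n => hj2 h.2),
              dif_neg (fun h : i + 1 < n ∧ j + 1 < n => hj2 h.2)]
            linear_combination E
        · rw [dif_neg hi2] at E
          by_cases hj2 : j + 1 < n
          · rw [dif_pos hj2] at E
            simp only [rext, dif_pos (And.intro hi hj),
              dif_neg (fun h : i + 1 < n ∧ j < n => hi2 h.1),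
              dif_pos (And.intro hi hj2),
              dif_neg (fun h : i + 1 < n ∧ j + 1 < n => hi2 h.1)]
            linear_combination E
          · rw [dif_neg hj2] at E
            simp only [rext, dif_pos (And.intro hi hj),
              dif_neg (fun h : i + 1 < n ∧ j < n => hi2 h.1),
              dif_neg (fun h : i < n ∧ j + 1 < n => hj2 h.2),
              dif_neg (fun h : i + 1 < n ∧ j + 1 < n => hi2 h.1)]
            linear_combination E
      · simp only [rext, dif_neg (fun h : i < n ∧ j < n => hj h.2),
          dif_neg (fun h : i + 1 < n ∧ j < n => hj h.2),
          dif_neg (fun h : i < n ∧ j + 1 < n => (by omega : ¬ (i < n ∧ j + 1 < n)) h),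
          dif_neg ((by omega : ¬ (i + 1 < n ∧ j + 1 < n)))]
        ring
    · simp only [rext, dif_neg (fun h : i < n ∧ j < n => hi h.1),
        dif_neg ((by omega : ¬ (i + 1 < n ∧ j < n))),
        dif_neg (fun h : i < n ∧ j + 1 < n => hi h.1),
        dif_neg ((by omega : ¬ (i + 1 < n ∧ j + 1 < n)))]
      ring
  have hind : ∀ s i j : ℕ, 2 * n ≤ i + j + s → rext n R i j = 0 := by
    intro s
    induction s with
    | zero =>
      intro i j hs
      exact dif_neg (by omega)
    | succ s ih =>
      intro i j hs
      by_cases hi : i < n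
      · by_cases hj : j < n
        · have h := hmain i j
          rw [ih (i+1) j (by omega), ih i (j+1) (by omega), ih (i+1) (j+1) (by omega)] at h
          have : (1 - l * star l) * rext n R i j = 0 := by rw [h]; ring
          exact (mul_eq_zero.mp this).resolve_left hne
        · exact dif_neg (by omega)
      · exact dif_neg (by omega)
  ext i j
  have := hind (2 * n) (i : ℕ) (j : ℕ) (by omega)
  simpa [rext, i.isLt, j.isLt] using this

/-- The real-linear map `R ↦ J_n(l)·R + Rᴴ`. -/
noncomputable def fmap (n : ℕ) (l : ℂ) :
    Matrix (Fin n) (Fin n) ℂ →ₗ[ℝ] Matrix (Fin n) (Fin n) ℂ where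
  toFun R := Jmat n l * R + Rᴴ
  map_add' R S := by
    simp only [Matrix.mul_add, Matrix.conjTranspose_add]
    abel
  map_smul' c R := by
    ext i j
    simp [Matrix.mul_apply, Matrix.conjTranspose_apply, Finset.mul_sum, mul_add,
      Complex.real_smul, mul_comm, mul_left_comm]

theorem stmt4 (n : ℕ) (l : ℂ) (hl : ‖l‖ ≠ 1)
    (B : Matrix (Fin n) (Fin n) ℂ) :
    ∃ R : Matrix (Fin n) (Fin n) ℂ, B + Jmat n l * R + Rᴴ = 0 := by
  have hinj : Function.Injective (fmap n l) := by
    rw [injective_iff_map_eq_zero]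
    intro R hRz
    exact Jmat_inj n l hl R hRz
  have hsurj : Function.Surjective (fmap n l) :=
    (LinearMap.injective_iff_surjective).mp hinj
  obtain ⟨R, hRv⟩ := hsurj (-B)
  refine ⟨R, ?_⟩
  have : Jmat n l * R + Rᴴ = -B := hRv
  rw [add_assoc, this, add_neg_cancel]
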